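/- Let θ be real with sin θ ≠ 0 and cos θ ≠ 0, and let x : ℝ → ℝ⁴ be differentiable with x'(t) = A(θ)·x(t) for all t. If x(0) lies in the subspace W = span{(1,0,0,−1), (0,1,1,0)}, then x(t) lies in W for all t and ‖x(t)‖ = ‖x(0)‖ for all t; explicitly, writing ω = tan θ + cot θ, the solution with x(0) = a·(1,0,0,−1) + b·(0,1,1,0) is x(t) = (a cos(ωt) − b sin(ωt))·(1,0,0,−1) + (a sin(ωt) + b cos(ωt))·(0,1,1,0). -/

import Mathlib

open Real Matrix
set_option maxHeartbeats 1000000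

noncomputable def alphaA (θ : ℝ) : Matrix (Fin 4) (Fin 4) ℝ :=
  !![1, -Real.cot θ, -Real.tan θ, 1;
     Real.cot θ, 1, -1, -Real.tan θ;
     Real.tan θ, -1, 1, -Real.cot θ;
     1, Real.tan θ, Real.cot θ, 1]

theorem stmt16 (θ : ℝ) (hs : Real.sin θ ≠ 0) (hc : Real.cos θ ≠ 0)
    (x : ℝ → EuclideanSpace ℝ (Fin 4))
    (hx : ∀ t, HasDerivAt x (WithLp.toLp 2 ((alphaA θ).mulVec (x t) : Fin 4 → ℝ) : EuclideanSpace ℝ (Fin 4)) t)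
    (a b : ℝ)
    (h0 : x 0 = a • (WithLp.toLp 2 (![1,0,0,-1] : Fin 4 → ℝ) : EuclideanSpace ℝ (Fin 4)) +
        b • (WithLp.toLp 2 (![0,1,1,0] : Fin 4 → ℝ) : EuclideanSpace ℝ (Fin 4))) :
    (∀ t, x t ∈ Submodule.span ℝ
        ({(WithLp.toLp 2 (![1,0,0,-1] : Fin 4 → ℝ) : EuclideanSpace ℝ (Fin 4)),
          (WithLp.toLp 2 (![0,1,1,0] : Fin 4 → ℝ) : EuclideanSpace ℝ (Fin 4))} :
          Set (EuclideanSpace ℝ (Fin 4)))) ∧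
    (∀ t, ‖x t‖ = ‖x 0‖) ∧
    (∀ t, x t =
      (a * Real.cos ((Real.tan θ + Real.cot θ) * t) -
        b * Real.sin ((Real.tan θ + Real.cot θ) * t)) •
          (WithLp.toLp 2 (![1,0,0,-1] : Fin 4 → ℝ) : EuclideanSpace ℝ (Fin 4)) +
      (a * Real.sin ((Real.tan θ + Real.cot θ) * t) +
        b * Real.cos ((Real.tan θ + Real.cot θ) * t)) •
          (WithLp.toLp 2 (![0,1,1,0] : Fin 4 → ℝ) : EuclideanSpace ℝ (Fin 4))) := by
  set ω : ℝ := Real.tan θ + Real.cot θ with hωdef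
  set v1 : EuclideanSpace ℝ (Fin 4) := (WithLp.toLp 2 (![1,0,0,-1] : Fin 4 → ℝ) : EuclideanSpace ℝ (Fin 4))
    with hv1
  set v2 : EuclideanSpace ℝ (Fin 4) := (WithLp.toLp 2 (![0,1,1,0] : Fin 4 → ℝ) : EuclideanSpace ℝ (Fin 4))
    with hv2
  -- The linear map u ↦ A u
  let L : EuclideanSpace ℝ (Fin 4) →ₗ[ℝ] EuclideanSpace ℝ (Fin 4) :=
    { toFun := fun u => (WithLp.toLp 2 ((alphaA θ).mulVec u : Fin 4 → ℝ) : EuclideanSpace ℝ (Fin 4))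
      map_add' := fun u w => by simp [Matrix.mulVec_add]
      map_smul' := fun c u => by
        simp [Matrix.mulVec_smul] }
  have hL1 : L v1 = ω • v2 := by
    ext i
    fin_cases i <;>
      simp [L, v1, v2, alphaA, Matrix.mulVec, dotProduct, Fin.sum_univ_four, hωdef] <;> ring
  have hL2 : L v2 = (-ω) • v1 := by
    ext i
    fin_cases i <;>
      simp [L, v1, v2, alphaA, Matrix.mulVec, dotProduct, Fin.sum_univ_four, hωdef] <;> ring
  -- explicit solution
  set y : ℝ → EuclideanSpace ℝ (Fin 4) := fun t =>
    (a * Real.cos (ω * t) - b * Real.sin (ω * t)) • v1 +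
    (a * Real.sin (ω * t) + b * Real.cos (ω * t)) • v2 with hy
  have hcos : ∀ t : ℝ, HasDerivAt (fun t => Real.cos (ω * t)) (-Real.sin (ω * t) * ω) t := by
    intro t
    exact (by simpa using (hasDerivAt_id t).const_mul ω : HasDerivAt (fun t => ω * t) ω t).cos
  have hsin : ∀ t : ℝ, HasDerivAt (fun t => Real.sin (ω * t)) (Real.cos (ω * t) * ω) t := by
    intro t
    exact (by simpa using (hasDerivAt_id t).const_mul ω : HasDerivAt (fun t => ω * t) ω t).sin
  have hy' : ∀ t, HasDerivAt y (L (y t)) t := by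
    intro t
    have hc' : HasDerivAt (fun t => a * Real.cos (ω * t) - b * Real.sin (ω * t))
        (-(ω * (a * Real.sin (ω * t) + b * Real.cos (ω * t)))) t := by
      have := (((hcos t).const_mul a).sub ((hsin t).const_mul b))
      exact this.congr_deriv (by ring)
    have hs' : HasDerivAt (fun t => a * Real.sin (ω * t) + b * Real.cos (ω * t))
        (ω * (a * Real.cos (ω * t) - b * Real.sin (ω * t))) t := by
      have := (((hsin t).const_mul a).add ((hcos t).const_mul b))
      exact this.congr_deriv (by ring)
    have hder : HasDerivAt y
        ((-(ω * (a * Real.sin (ω * t) + b * Real.cos (ω * t)))) • v1 +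
          (ω * (a * Real.cos (ω * t) - b * Real.sin (ω * t))) • v2) t :=
      (hc'.smul_const v1).add (hs'.smul_const v2)
    have : L (y t) = (-(ω * (a * Real.sin (ω * t) + b * Real.cos (ω * t)))) • v1 +
        (ω * (a * Real.cos (ω * t) - b * Real.sin (ω * t))) • v2 := by
      rw [hy]
      simp only [map_add, _root_.map_smul, hL1, hL2, smul_smul]
      module
    rw [this]
    exact hder
  -- continuity
  have hxc : Continuous x := by
    rw [continuous_iff_continuousAt]; exact fun t => (hx t).continuousAt
  have hyc : Continuous y := by
    rw [continuous_iff_continuousAt]; exact fun t => (hy' t).continuousAt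
  have heq0 : x 0 = y 0 := by
    rw [h0, hy]; norm_num
  -- uniqueness
  have key : ∀ t, x t = y t := by
    intro t
    let L' := LinearMap.toContinuousLinearMap L
    have hlip : ∀ s : ℝ, LipschitzWith ‖L'‖₊ (fun u : EuclideanSpace ℝ (Fin 4) => L u) :=
      fun _ => L'.lipschitz
    have ht0 : (0 : ℝ) ∈ Set.Ioo (-(|t| + 1)) (|t| + 1) := by
      constructor <;> [nlinarith [abs_nonneg t]; nlinarith [abs_nonneg t]]
    have hmem : t ∈ Set.Icc (-(|t| + 1)) (|t| + 1) := by
      constructor <;> [nlinarith [neg_abs_le t]; nlinarith [le_abs_self t]]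
    refine ODE_solution_unique_of_mem_Icc
      (v := fun _ u => L u) (s := fun _ => Set.univ)
      (fun s _ => (hlip s).lipschitzOnWith) ht0
      (hxc.continuousOn) (fun s _ => hx s) (fun _ _ => trivial)
      (hyc.continuousOn) (fun s _ => hy' s) (fun _ _ => trivial) heq0 hmem
  refine ⟨?_, ?_, key⟩
  · intro t
    rw [key t, hy]
    exact Submodule.add_mem _
      (Submodule.smul_mem _ _ (Submodule.subset_span (Set.mem_insert _ _)))
      (Submodule.smul_mem _ _ (Submodule.subset_span (Set.mem_insert_of_mem _ rfl)))
  · intro t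
    have hval : ∀ c s : ℝ, ‖c • v1 + s • v2‖ = Real.sqrt (2 * (c ^ 2 + s ^ 2)) := by
      intro c s
      rw [EuclideanSpace.norm_eq]
      congr 1
      simp only [PiLp.add_apply, PiLp.smul_apply, Real.norm_eq_abs, sq_abs,
        Fin.sum_univ_four]
      simp [v1, v2]
      ring
    have hn : ∀ t, ‖x t‖ = Real.sqrt (2 * (a ^ 2 + b ^ 2)) := by
      intro t
      rw [key t]
      show ‖(a * Real.cos (ω * t) - b * Real.sin (ω * t)) • v1 +
        (a * Real.sin (ω * t) + b * Real.cos (ω * t)) • v2‖ = _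
      rw [hval]
      congr 1
      nlinarith [Real.sin_sq_add_cos_sq (ω * t)]
    rw [hn t, hn 0]
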